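/- Let Y₊ > 1/2 and suppose the time value of a call satisfies δC(k) ~ c₊ e^{-(Y₊ - 1/2)k} as k → +∞ with c₊ > 0. If the implied total variance v_imp(k) satisfies δC(k) = C^BS(v_imp(k), k) - (1-e^k)⁺ and v_imp(k)/k → β as k → ∞ for some β ∈ (0,2), then β = β₊ := 4(Y₊ - √(Y₊² - 1/4)), which is the unique solution in (0,2) of 1/(2β) - 1/2 + β/8 = Y₊ - 1/2. -/

import Mathlib

open MeasureTheory Filter Topology

/-- Standard normal density. -/
noncomputable def gaussPDF (x : ℝ) : ℝ := Real.exp (-x ^ 2 / 2) / Real.sqrt (2 * Real.pi)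

/-- Standard normal CDF. -/
noncomputable def gaussCDF (x : ℝ) : ℝ := ∫ t in Set.Iic x, gaussPDF t

/-- Non-dimensional Black-Scholes call price. -/
noncomputable def CBS (v k : ℝ) : ℝ :=
  gaussCDF ((-k + v / 2) / Real.sqrt v) - Real.exp k * gaussCDF ((-k - v / 2) / Real.sqrt v)


lemma sqrt2pi_pos : 0 < Real.sqrt (2 * Real.pi) :=
  Real.sqrt_pos.2 (by positivity)

lemma gaussPDF_pos (x : ℝ) : 0 < gaussPDF x :=
  div_pos (Real.exp_pos _) sqrt2pi_pos

lemma gaussPDF_even (x : ℝ) : gaussPDF (-x) = gaussPDF x := by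
  simp [gaussPDF]

lemma integrable_exp_sq : Integrable (fun t : ℝ => Real.exp (-t ^ 2 / 2)) := by
  have h := integrable_exp_neg_mul_sq (b := 1/2) (by norm_num)
  exact h.congr (Eventually.of_forall fun t => by show Real.exp _ = Real.exp _; rw [show -(1/2) * t^2 = -t^2/2 by ring])

lemma integrable_gaussPDF : Integrable gaussPDF :=
  integrable_exp_sq.div_const (Real.sqrt (2 * Real.pi))

lemma gaussCDF_nonneg (x : ℝ) : 0 ≤ gaussCDF x :=
  setIntegral_nonneg measurableSet_Iic fun t _ => (gaussPDF_pos t).le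

lemma tendsto_exp_sq_atBot : Tendsto (fun t : ℝ => Real.exp (-t ^ 2 / 2)) atBot (𝓝 0) := by
  apply Real.tendsto_exp_atBot.comp
  apply tendsto_atBot_mono' atBot (f₁ := fun t : ℝ => t) _ tendsto_id
  filter_upwards [eventually_le_atBot (-2 : ℝ)] with t ht
  nlinarith

/-- ∫_{-∞}^x (-t) e^{-t²/2} dt = e^{-x²/2} -/
lemma integral_negt_exp (x : ℝ) :
    ∫ t in Set.Iic x, (-t) * Real.exp (-t ^ 2 / 2) = Real.exp (-x ^ 2 / 2) := by
  have hderiv : ∀ t ∈ Set.Iic x, HasDerivAt (fun t : ℝ => Real.exp (-t ^ 2 / 2))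
      ((-t) * Real.exp (-t ^ 2 / 2)) t := by
    intro t _
    have h1 : HasDerivAt (fun t : ℝ => -t ^ 2 / 2) (-t) t := by
      have := ((hasDerivAt_pow 2 t).neg).div_const 2
      simpa using this.congr_deriv (by ring)
    simpa [mul_comm] using h1.exp
  have hint : IntegrableOn (fun t : ℝ => (-t) * Real.exp (-t ^ 2 / 2)) (Set.Iic x) := by
    have h0 : Integrable (fun t : ℝ => t * Real.exp (-(1/2) * t ^ 2)) := by
      simpa using integrable_mul_exp_neg_mul_sq (b := 1/2) (by norm_num)
    have h1 := h0.neg.congr (Eventually.of_forall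
      (fun t => by show -(t * Real.exp (-(1/2) * t^2)) = -t * Real.exp (-t^2/2)
                   rw [show -(1/2) * t^2 = -t^2/2 by ring]; ring))
    exact h1.integrableOn
  rw [integral_Iic_of_hasDerivAt_of_tendsto' hderiv hint tendsto_exp_sq_atBot, sub_zero]

lemma hasDerivAt_exp_sq (t : ℝ) :
    HasDerivAt (fun t : ℝ => Real.exp (-t ^ 2 / 2)) ((-t) * Real.exp (-t ^ 2 / 2)) t := by
  have h1 : HasDerivAt (fun t : ℝ => -t ^ 2 / 2) (-t) t := by
    have := ((hasDerivAt_pow 2 t).neg).div_const 2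
    simpa using this.congr_deriv (by ring)
  simpa [mul_comm] using h1.exp

/-- Upper Gaussian tail bound. -/
lemma gaussCDF_le {x : ℝ} (hx : x < 0) : gaussCDF x ≤ gaussPDF x / (-x) := by
  have hx' : 0 < -x := by linarith
  have hintneg : Integrable (fun t : ℝ => (-t) * Real.exp (-t ^ 2 / 2)) := by
    have h0 : Integrable (fun t : ℝ => t * Real.exp (-(1/2) * t ^ 2)) := by
      simpa using integrable_mul_exp_neg_mul_sq (b := 1/2) (by norm_num)
    exact h0.neg.congr (Eventually.of_forall
      (fun t => by show -(t * Real.exp (-(1/2) * t^2)) = -t * Real.exp (-t^2/2)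
                   rw [show -(1/2) * t^2 = -t^2/2 by ring]; ring))
  have key : ∫ t in Set.Iic x, Real.exp (-t ^ 2 / 2) ≤ Real.exp (-x ^ 2 / 2) / (-x) := by
    have hmono : ∫ t in Set.Iic x, Real.exp (-t ^ 2 / 2)
        ≤ ∫ t in Set.Iic x, ((-t) * Real.exp (-t ^ 2 / 2)) / (-x) := by
      apply setIntegral_mono_on integrable_exp_sq.integrableOn
        (hintneg.div_const _).integrableOn measurableSet_Iic
      intro t ht
      have htx : t ≤ x := ht
      rw [le_div_iff₀ hx']
      nlinarith [Real.exp_pos (-t^2/2)]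
    calc ∫ t in Set.Iic x, Real.exp (-t ^ 2 / 2)
        ≤ ∫ t in Set.Iic x, ((-t) * Real.exp (-t ^ 2 / 2)) / (-x) := hmono
      _ = (∫ t in Set.Iic x, (-t) * Real.exp (-t ^ 2 / 2)) / (-x) := integral_div _ _
      _ = Real.exp (-x ^ 2 / 2) / (-x) := by rw [integral_negt_exp]
  have hCDF : gaussCDF x = (∫ t in Set.Iic x, Real.exp (-t ^ 2 / 2)) / Real.sqrt (2 * Real.pi) :=
    integral_div _ _
  rw [hCDF, gaussPDF]
  rw [div_le_iff₀ sqrt2pi_pos]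
  calc (∫ t in Set.Iic x, Real.exp (-t ^ 2 / 2))
      ≤ Real.exp (-x ^ 2 / 2) / (-x) := key
    _ = Real.exp (-x ^ 2 / 2) / Real.sqrt (2 * Real.pi) / -x * Real.sqrt (2 * Real.pi) := by
        rw [div_right_comm, div_mul_cancel₀ _ (ne_of_gt sqrt2pi_pos)]

/-- Lower Gaussian tail bound. -/
lemma gaussCDF_ge (x : ℝ) : (-x) / (1 + x ^ 2) * gaussPDF x ≤ gaussCDF x := by
  set f : ℝ → ℝ := fun t => (-t) / (1 + t ^ 2) * Real.exp (-t ^ 2 / 2) with hf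
  set f' : ℝ → ℝ := fun t => (1 - 2 / (1 + t ^ 2) ^ 2) * Real.exp (-t ^ 2 / 2) with hf'
  have hden : ∀ t : ℝ, (0 : ℝ) < 1 + t ^ 2 := fun t => by positivity
  have hderiv : ∀ t : ℝ, HasDerivAt f (f' t) t := by
    intro t
    have h1 : HasDerivAt (fun t : ℝ => (-t) / (1 + t ^ 2))
        (((-1) * (1 + t ^ 2) - (-t) * (2 * t)) / (1 + t ^ 2) ^ 2) t := by
      have hn : HasDerivAt (fun t : ℝ => -t) (-1) t := (hasDerivAt_id t).neg
      have hd : HasDerivAt (fun t : ℝ => 1 + t ^ 2) (2 * t) t := by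
        simpa using (hasDerivAt_pow 2 t).const_add 1
      exact hn.div hd (ne_of_gt (hden t))
    have h2 := h1.mul (hasDerivAt_exp_sq t)
    have h3 := ne_of_gt (hden t)
    have hs : (1 - 2/(1+t^2)^2) * Real.exp (-t ^ 2 / 2)
        = ((-1) * (1 + t ^ 2) - (-t) * (2 * t)) / (1 + t ^ 2) ^ 2 * Real.exp (-t ^ 2 / 2)
          + (-t / (1 + t ^ 2)) * ((-t) * Real.exp (-t ^ 2 / 2)) := by
      field_simp
      ring
    show HasDerivAt f ((1 - 2 / (1 + t ^ 2) ^ 2) * Real.exp (-t ^ 2 / 2)) t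
    rw [hs]; exact h2
  have hf'le : ∀ t : ℝ, f' t ≤ Real.exp (-t ^ 2 / 2) := by
    intro t
    have h1 : (0:ℝ) < 2 / (1 + t ^ 2) ^ 2 := by positivity
    show (1 - 2 / (1 + t ^ 2) ^ 2) * Real.exp (-t ^ 2 / 2) ≤ _
    nlinarith [Real.exp_pos (-t ^ 2 / 2), mul_pos h1 (Real.exp_pos (-t ^ 2 / 2))]
  have hf'int : Integrable f' := by
    refine integrable_exp_sq.mono ?_ (Eventually.of_forall fun t => ?_)
    · apply Continuous.aestronglyMeasurable
      apply Continuous.mul _ (by continuity)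
      apply Continuous.sub continuous_const
      exact (continuous_const.div (by continuity) fun t => by positivity)
    · rw [Real.norm_eq_abs, Real.norm_eq_abs, abs_of_pos (Real.exp_pos _), abs_le]
      refine ⟨?_, hf'le t⟩
      show -Real.exp (-t ^ 2 / 2) ≤ (1 - 2 / (1 + t ^ 2) ^ 2) * Real.exp (-t ^ 2 / 2)
      have h1 : 2 / (1 + t ^ 2) ^ 2 ≤ 2 := by
        rw [div_le_iff₀ (by positivity)]
        nlinarith [sq_nonneg t]
      nlinarith [mul_le_mul_of_nonneg_right h1 (Real.exp_pos (-t ^ 2 / 2)).le]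
  have hbot : Tendsto f atBot (𝓝 0) := by
    apply tendsto_of_tendsto_of_tendsto_of_le_of_le' (tendsto_const_nhds (x := (0:ℝ)))
      tendsto_exp_sq_atBot
    · filter_upwards [eventually_le_atBot (0 : ℝ)] with t ht
      show (0:ℝ) ≤ (-t) / (1 + t ^ 2) * Real.exp (-t ^ 2 / 2)
      have : 0 ≤ -t := by linarith
      positivity
    · filter_upwards [eventually_le_atBot (0 : ℝ)] with t ht
      show (-t) / (1 + t ^ 2) * Real.exp (-t ^ 2 / 2) ≤ Real.exp (-t ^ 2 / 2)
      have h1 : (-t) / (1 + t ^ 2) ≤ 1 := by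
        rw [div_le_one (hden t)]; nlinarith
      nlinarith [Real.exp_pos (-t ^ 2 / 2)]
  have hint : ∫ t in Set.Iic x, f' t = f x := by
    rw [integral_Iic_of_hasDerivAt_of_tendsto' (fun t _ => hderiv t)
      hf'int.integrableOn hbot, sub_zero]
  have hle : f x ≤ ∫ t in Set.Iic x, Real.exp (-t ^ 2 / 2) := by
    rw [← hint]
    exact setIntegral_mono_on hf'int.integrableOn integrable_exp_sq.integrableOn
      measurableSet_Iic fun t _ => hf'le t
  have hCDF : gaussCDF x = (∫ t in Set.Iic x, Real.exp (-t ^ 2 / 2)) / Real.sqrt (2 * Real.pi) :=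
    integral_div _ _
  rw [hCDF, gaussPDF]
  calc (-x) / (1 + x ^ 2) * (Real.exp (-x ^ 2 / 2) / Real.sqrt (2 * Real.pi))
      = f x / Real.sqrt (2 * Real.pi) := by rw [hf]; ring
    _ ≤ (∫ t in Set.Iic x, Real.exp (-t ^ 2 / 2)) / Real.sqrt (2 * Real.pi) := by
        exact (div_le_div_iff_of_pos_right sqrt2pi_pos).2 hle

lemma tendsto_log_div_of_sqrt {g : ℝ → ℝ} {C : ℝ} (hC : 0 < C)
    (hg : Tendsto (fun k => g k / Real.sqrt k) atTop (𝓝 C)) :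
    Tendsto (fun k => Real.log (g k) / k) atTop (𝓝 0) := by
  have hgpos : ∀ᶠ k in atTop, C / 2 < g k / Real.sqrt k :=
    hg.eventually (eventually_gt_nhds (by linarith))
  have h1 : Tendsto (fun k : ℝ => Real.log (g k / Real.sqrt k) / k) atTop (𝓝 0) :=
    Tendsto.div_atTop (hg.log (ne_of_gt hC)) tendsto_id
  have h2 : Tendsto (fun k : ℝ => 1 / 2 * (Real.log k / k)) atTop (𝓝 0) := by
    have := (Real.isLittleO_log_id_atTop.tendsto_div_nhds_zero).const_mul (1/2 : ℝ); simpa using this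
  apply Tendsto.congr' ?_ (by simpa using h1.add h2)
  filter_upwards [eventually_gt_atTop (0 : ℝ), hgpos] with k hk hgk
  have hsk : 0 < Real.sqrt k := Real.sqrt_pos.2 hk
  have hgk0 : 0 < g k := by
    have h := mul_pos (show 0 < g k / Real.sqrt k by linarith) hsk
    rwa [div_mul_cancel₀ _ (ne_of_gt hsk)] at h
  have hlg : Real.log (g k) = Real.log (g k / Real.sqrt k) + Real.log k / 2 := by
    rw [Real.log_div (ne_of_gt hgk0) (ne_of_gt hsk), Real.log_sqrt hk.le]; ring
  rw [hlg, add_div]; ring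

set_option maxHeartbeats 2000000 in
/-- Lee-type wing matching: if the call time value decays like `c₊ e^{-(Y₊-1/2)k}` and the
implied total variance satisfies `v_imp(k)/k → β ∈ (0,2)`, then
`β = β₊ = 4(Y₊ - √(Y₊² - 1/4))`, the unique solution in `(0,2)` of
`1/(2β) - 1/2 + β/8 = Y₊ - 1/2`. -/
theorem lee_wing_matching (Y c β : ℝ) (δC vimp : ℝ → ℝ)
    (hY : 1 / 2 < Y) (hc : 0 < c)
    (hvpos : ∀ k, 0 < vimp k)
    (hδ : ∀ k, δC k = CBS (vimp k) k - max (1 - Real.exp k) 0)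
    (hasym : Tendsto (fun k => δC k / (c * Real.exp (-(Y - 1 / 2) * k))) atTop (𝓝 1))
    (hβ : β ∈ Set.Ioo (0 : ℝ) 2)
    (hlim : Tendsto (fun k => vimp k / k) atTop (𝓝 β)) :
    β = 4 * (Y - Real.sqrt (Y ^ 2 - 1 / 4)) ∧
      (1 / (2 * β) - 1 / 2 + β / 8 = Y - 1 / 2) ∧
      (∀ β' ∈ Set.Ioo (0 : ℝ) 2, 1 / (2 * β') - 1 / 2 + β' / 8 = Y - 1 / 2 → β' = β) := by
  obtain ⟨hβ0, hβ2⟩ := hβ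
  have hsβ : 0 < Real.sqrt β := Real.sqrt_pos.2 hβ0
  set A : ℝ := (1 - β / 2) / Real.sqrt β with hA
  set B : ℝ := (1 + β / 2) / Real.sqrt β with hB
  clear_value A B
  have hA0 : 0 < A := by rw [hA]; exact div_pos (by linarith) hsβ
  have hB0 : 0 < B := by rw [hB]; exact div_pos (by linarith) hsβ
  have hAB : A < B := by
    rw [hA, hB, div_lt_div_iff₀ hsβ hsβ]
    nlinarith
  set a : ℝ → ℝ := fun k => (k - vimp k / 2) / Real.sqrt (vimp k) with ha
  set b : ℝ → ℝ := fun k => (k + vimp k / 2) / Real.sqrt (vimp k) with hb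
  clear_value a b
  set m : ℝ → ℝ := fun k => a k / (1 + (a k) ^ 2) - 1 / b k with hm
  clear_value m
  -- limits of a k / √k and b k / √k
  have haT : Tendsto (fun k => a k / Real.sqrt k) atTop (𝓝 A) := by
    rw [hA]
    have h1 : Tendsto (fun k => (1 - vimp k / k / 2) / Real.sqrt (vimp k / k)) atTop (𝓝 ((1 - β / 2) / Real.sqrt β)) :=
      Tendsto.div (tendsto_const_nhds.sub (hlim.div_const 2))
        ((Real.continuous_sqrt.tendsto β).comp hlim) (ne_of_gt hsβ)
    apply Tendsto.congr' _ h1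
    filter_upwards [eventually_gt_atTop (0 : ℝ)] with k hk
    simp only [ha]
    obtain ⟨s, hs0, rfl⟩ : ∃ s, 0 < s ∧ s * s = k :=
      ⟨Real.sqrt k, Real.sqrt_pos.2 hk, Real.mul_self_sqrt hk.le⟩
    have hv := hvpos (s * s)
    have hsv : 0 < Real.sqrt (vimp (s * s)) := Real.sqrt_pos.2 hv
    rw [Real.sqrt_div hv.le, Real.sqrt_mul_self hs0.le]
    field_simp
  have hbT : Tendsto (fun k => b k / Real.sqrt k) atTop (𝓝 B) := by
    rw [hB]
    have h1 : Tendsto (fun k => (1 + vimp k / k / 2) / Real.sqrt (vimp k / k)) atTop (𝓝 ((1 + β / 2) / Real.sqrt β)) :=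
      Tendsto.div (tendsto_const_nhds.add (hlim.div_const 2))
        ((Real.continuous_sqrt.tendsto β).comp hlim) (ne_of_gt hsβ)
    apply Tendsto.congr' _ h1
    filter_upwards [eventually_gt_atTop (0 : ℝ)] with k hk
    simp only [hb]
    obtain ⟨s, hs0, rfl⟩ : ∃ s, 0 < s ∧ s * s = k :=
      ⟨Real.sqrt k, Real.sqrt_pos.2 hk, Real.mul_self_sqrt hk.le⟩
    have hv := hvpos (s * s)
    have hsv : 0 < Real.sqrt (vimp (s * s)) := Real.sqrt_pos.2 hv
    rw [Real.sqrt_div hv.le, Real.sqrt_mul_self hs0.le]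
    field_simp
  -- limit of a k ^ 2 / k
  have ha2T : Tendsto (fun k => (a k) ^ 2 / k) atTop (𝓝 (A ^ 2)) := by
    have h1 : Tendsto (fun k => (a k / Real.sqrt k) * (a k / Real.sqrt k)) atTop (𝓝 (A ^ 2)) := by
      rw [pow_two]; exact haT.mul haT
    apply Tendsto.congr' _ h1
    filter_upwards [eventually_gt_atTop (0 : ℝ)] with k hk
    rw [div_mul_div_comm, Real.mul_self_sqrt hk.le, ← pow_two]
  -- limit of √k * m k
  have hmT : Tendsto (fun k => Real.sqrt k * m k) atTop (𝓝 (1 / A - 1 / B)) := by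
    have hden : Tendsto (fun k => (1 + (a k) ^ 2) / k) atTop (𝓝 (A ^ 2)) := by
      have h0 : Tendsto (fun k : ℝ => 1 / k) atTop (𝓝 0) := by
        simpa [one_div] using (tendsto_inv_atTop_zero (𝕜 := ℝ))
      exact Tendsto.congr (fun k => (add_div 1 ((a k) ^ 2) k).symm) (by simpa using h0.add ha2T)
    have h1 : Tendsto (fun k => (a k / Real.sqrt k) / ((1 + (a k) ^ 2) / k)) atTop (𝓝 (1 / A)) := by
      have := haT.div hden (by positivity)
      have hAA : A / A ^ 2 = 1 / A := by field_simp
      rwa [hAA] at this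
    have h2 : Tendsto (fun k => (b k / Real.sqrt k)⁻¹) atTop (𝓝 (1 / B)) := by
      rw [show (1 : ℝ) / B = B⁻¹ by rw [one_div]]
      exact hbT.inv₀ (ne_of_gt hB0)
    apply Tendsto.congr' _ (h1.sub h2)
    filter_upwards [eventually_gt_atTop (0 : ℝ)] with k hk
    obtain ⟨s, hs0, rfl⟩ : ∃ s, 0 < s ∧ s * s = k :=
      ⟨Real.sqrt k, Real.sqrt_pos.2 hk, Real.mul_self_sqrt hk.le⟩
    rw [Real.sqrt_mul_self hs0.le, inv_div]
    have hden2 : (0:ℝ) < 1 + (a (s*s)) ^ 2 := by positivity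
    simp only [hm]
    show a (s*s) / s / ((1 + a (s*s) ^ 2) / (s*s)) - s / b (s*s)
        = s * (a (s*s) / (1 + a (s*s) ^ 2) - 1 / b (s*s))
    rw [div_div_div_comm]
    rw [mul_sub]
    congr 1
    · field_simp
    · rw [mul_one_div]
  have hMpos : 0 < 1 / A - 1 / B := by
    rw [sub_pos]
    exact one_div_lt_one_div_of_lt hA0 hAB
  -- eventual positivity
  have hapos : ∀ᶠ k in atTop, 0 < a k := by
    filter_upwards [haT.eventually (eventually_gt_nhds (by linarith : A / 2 < A)),
      eventually_gt_atTop (0 : ℝ)] with k h1 h2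
    have hsk : 0 < Real.sqrt k := Real.sqrt_pos.2 h2
    have := mul_pos (lt_trans (by positivity) h1) hsk
    rwa [div_mul_cancel₀ _ (ne_of_gt hsk)] at this
  have hmpos : ∀ᶠ k in atTop, 0 < m k := by
    filter_upwards [hmT.eventually (eventually_gt_nhds (by linarith : (1/A - 1/B)/2 < 1/A - 1/B)),
      eventually_gt_atTop (0 : ℝ)] with k h1 h2
    have hsk : 0 < Real.sqrt k := Real.sqrt_pos.2 h2
    by_contra hcon
    push_neg at hcon
    exact absurd (mul_nonpos_of_nonneg_of_nonpos hsk.le hcon)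
      (not_le.2 (lt_trans (div_pos hMpos two_pos) h1))
  -- log limits
  have hloga : Tendsto (fun k => Real.log (a k) / k) atTop (𝓝 0) :=
    tendsto_log_div_of_sqrt hA0 haT
  have hlogm : Tendsto (fun k => Real.log (m k) / k) atTop (𝓝 0) := by
    have hg : Tendsto (fun k => (k * m k) / Real.sqrt k) atTop (𝓝 (1 / A - 1 / B)) := by
      apply Tendsto.congr' _ hmT
      filter_upwards [eventually_gt_atTop (0 : ℝ)] with k hk
      rw [mul_comm k (m k), mul_div_assoc, Real.div_sqrt, mul_comm]
    have h0 := tendsto_log_div_of_sqrt hMpos hg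
    have h1 : Tendsto (fun k : ℝ => Real.log k / k) atTop (𝓝 0) :=
      Real.isLittleO_log_id_atTop.tendsto_div_nhds_zero
    apply Tendsto.congr' _ (by simpa using h0.sub h1)
    filter_upwards [eventually_gt_atTop (0 : ℝ), hmpos] with k hk hmk
    rw [Real.log_mul (ne_of_gt hk) (ne_of_gt hmk), add_div]
    ring
  -- rewrite of CBS
  have hCBS : ∀ k, CBS (vimp k) k = gaussCDF (-(a k)) - Real.exp k * gaussCDF (-(b k)) := by
    intro k
    rw [CBS, ha, hb]
    congr 2 <;> rw [← neg_div] <;> ring_nf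
  -- key pdf identity
  have hpdf : ∀ k, Real.exp k * gaussPDF (b k) = gaussPDF (a k) := by
    intro k
    have hv := hvpos k
    have hsv : 0 < Real.sqrt (vimp k) := Real.sqrt_pos.2 hv
    have hvv : Real.sqrt (vimp k) ^ 2 = vimp k := Real.sq_sqrt hv.le
    show Real.exp k * (Real.exp (-(b k) ^ 2 / 2) / Real.sqrt (2 * Real.pi))
        = Real.exp (-(a k) ^ 2 / 2) / Real.sqrt (2 * Real.pi)
    rw [mul_div_assoc', ← Real.exp_add]
    congr 2
    simp only [ha, hb]
    show k + -((k + vimp k / 2) / Real.sqrt (vimp k)) ^ 2 / 2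
        = -((k - vimp k / 2) / Real.sqrt (vimp k)) ^ 2 / 2
    rw [div_pow, div_pow, hvv]
    field_simp
    ring
  -- upper and lower bounds for CBS
  have hub : ∀ᶠ k in atTop, CBS (vimp k) k ≤ gaussPDF (a k) / a k := by
    filter_upwards [hapos] with k hk
    rw [hCBS k]
    have h1 : gaussCDF (-(a k)) ≤ gaussPDF (a k) / a k := by
      have := gaussCDF_le (x := -(a k)) (by linarith)
      rwa [gaussPDF_even, neg_neg] at this
    have h2 : 0 ≤ Real.exp k * gaussCDF (-(b k)) :=
      mul_nonneg (Real.exp_pos k).le (gaussCDF_nonneg _)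
    linarith
  have hbpos : ∀ᶠ k in atTop, 0 < b k := by
    filter_upwards [hbT.eventually (eventually_gt_nhds (by linarith : B / 2 < B)),
      eventually_gt_atTop (0 : ℝ)] with k h1 h2
    have hsk : 0 < Real.sqrt k := Real.sqrt_pos.2 h2
    have := mul_pos (lt_trans (by positivity) h1) hsk
    rwa [div_mul_cancel₀ _ (ne_of_gt hsk)] at this
  have hlb : ∀ᶠ k in atTop, gaussPDF (a k) * m k ≤ CBS (vimp k) k := by
    filter_upwards [hapos, hbpos] with k hak hbk
    rw [hCBS k]
    have h1 : a k / (1 + (a k) ^ 2) * gaussPDF (a k) ≤ gaussCDF (-(a k)) := by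
      have := gaussCDF_ge (-(a k))
      rwa [neg_neg, neg_sq, gaussPDF_even] at this
    have h2 : Real.exp k * gaussCDF (-(b k)) ≤ gaussPDF (a k) / b k := by
      have h3 := gaussCDF_le (x := -(b k)) (by linarith)
      rw [neg_neg, gaussPDF_even] at h3
      calc Real.exp k * gaussCDF (-(b k))
          ≤ Real.exp k * (gaussPDF (b k) / b k) :=
            mul_le_mul_of_nonneg_left h3 (Real.exp_pos k).le
        _ = (Real.exp k * gaussPDF (b k)) / b k := (mul_div_assoc _ _ _).symm
        _ = gaussPDF (a k) / b k := by rw [hpdf k]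
    have h4 : gaussPDF (a k) * m k
        = a k / (1 + (a k) ^ 2) * gaussPDF (a k) - gaussPDF (a k) / b k := by
      simp only [hm]
      ring
    linarith
  -- squeeze for log CBS / k
  have hCBSlim : Tendsto (fun k => Real.log (CBS (vimp k) k) / k) atTop (𝓝 (-(A ^ 2) / 2)) := by
    have hc2T : Tendsto (fun k : ℝ => Real.log (Real.sqrt (2 * Real.pi)) / k) atTop (𝓝 0) :=
      Tendsto.div_atTop tendsto_const_nhds tendsto_id
    have hupT : Tendsto (fun k => -((a k) ^ 2 / k) / 2 - Real.log (Real.sqrt (2 * Real.pi)) / k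
        - Real.log (a k) / k) atTop (𝓝 (-(A ^ 2) / 2)) := by
      have h1 := (((ha2T.div_const 2).neg).sub hc2T).sub hloga
      have h2 : -(A ^ 2 / 2) - 0 - 0 = -(A ^ 2) / 2 := by ring
      rw [h2] at h1
      exact h1.congr fun k => by ring
    have hloT : Tendsto (fun k => -((a k) ^ 2 / k) / 2 - Real.log (Real.sqrt (2 * Real.pi)) / k
        + Real.log (m k) / k) atTop (𝓝 (-(A ^ 2) / 2)) := by
      have h1 := (((ha2T.div_const 2).neg).sub hc2T).add hlogm
      have h2 : -(A ^ 2 / 2) - 0 + 0 = -(A ^ 2) / 2 := by ring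
      rw [h2] at h1
      exact h1.congr fun k => by ring
    apply tendsto_of_tendsto_of_tendsto_of_le_of_le' hloT hupT
    · -- lower bound
      filter_upwards [hlb, hapos, hmpos, eventually_gt_atTop (0 : ℝ)] with k hl hak hmk hk
      have hpdfpos := gaussPDF_pos (a k)
      have hprod : 0 < gaussPDF (a k) * m k := mul_pos hpdfpos hmk
      have h1 : -(a k) ^ 2 / 2 - Real.log (Real.sqrt (2 * Real.pi)) + Real.log (m k)
          ≤ Real.log (CBS (vimp k) k) := by
        have h2 := Real.log_le_log hprod hl
        rwa [Real.log_mul (ne_of_gt hpdfpos) (ne_of_gt hmk),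
          show gaussPDF (a k) = Real.exp (-(a k) ^ 2 / 2) / Real.sqrt (2 * Real.pi) from rfl,
          Real.log_div (Real.exp_ne_zero _) (ne_of_gt sqrt2pi_pos), Real.log_exp] at h2
      have h3 : -((a k) ^ 2 / k) / 2 - Real.log (Real.sqrt (2 * Real.pi)) / k
          + Real.log (m k) / k
          = (-(a k) ^ 2 / 2 - Real.log (Real.sqrt (2 * Real.pi)) + Real.log (m k)) / k := by
        ring
      rw [h3]
      exact div_le_div_of_nonneg_right h1 hk.le 
    · -- upper bound
      filter_upwards [hub, hlb, hapos, hmpos, eventually_gt_atTop (0 : ℝ)]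
        with k hu hl hak hmk hk
      have hpdfpos := gaussPDF_pos (a k)
      have hCpos : 0 < CBS (vimp k) k := lt_of_lt_of_le (mul_pos hpdfpos hmk) hl
      have h1 : Real.log (CBS (vimp k) k)
          ≤ -(a k) ^ 2 / 2 - Real.log (Real.sqrt (2 * Real.pi)) - Real.log (a k) := by
        have h2 := Real.log_le_log hCpos hu
        rwa [show gaussPDF (a k) = Real.exp (-(a k) ^ 2 / 2) / Real.sqrt (2 * Real.pi) from rfl,
          Real.log_div (by positivity) (ne_of_gt hak),
          Real.log_div (Real.exp_ne_zero _) (ne_of_gt sqrt2pi_pos), Real.log_exp] at h2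
      have h3 : -((a k) ^ 2 / k) / 2 - Real.log (Real.sqrt (2 * Real.pi)) / k
          - Real.log (a k) / k
          = (-(a k) ^ 2 / 2 - Real.log (Real.sqrt (2 * Real.pi)) - Real.log (a k)) / k := by
        ring
      rw [h3]
      exact div_le_div_of_nonneg_right h1 hk.le
  -- limit from the asymptotic hypothesis
  have hδlim : Tendsto (fun k => Real.log (δC k) / k) atTop (𝓝 (-(Y - 1 / 2))) := by
    have hden : ∀ k : ℝ, 0 < c * Real.exp (-(Y - 1 / 2) * k) := fun k => by positivity
    have hpos1 : ∀ᶠ k in atTop, (1 : ℝ) / 2 < δC k / (c * Real.exp (-(Y - 1 / 2) * k)) :=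
      hasym.eventually (eventually_gt_nhds (by norm_num))
    have hlr : Tendsto (fun k => Real.log (δC k / (c * Real.exp (-(Y - 1 / 2) * k))))
        atTop (𝓝 0) := by
      have := hasym.log one_ne_zero
      simpa using this
    have h1 : Tendsto (fun k => Real.log (δC k / (c * Real.exp (-(Y - 1 / 2) * k))) / k)
        atTop (𝓝 0) := Tendsto.div_atTop hlr tendsto_id
    have h2 : Tendsto (fun k : ℝ => Real.log c / k) atTop (𝓝 0) :=
      Tendsto.div_atTop tendsto_const_nhds tendsto_id
    have h3 := (h1.add h2).add (tendsto_const_nhds (x := -(Y - 1 / 2)) (f := atTop))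
    have h4 : (0 : ℝ) + 0 + -(Y - 1 / 2) = -(Y - 1 / 2) := by ring
    rw [h4] at h3
    apply Tendsto.congr' _ h3
    filter_upwards [hpos1, eventually_gt_atTop (0 : ℝ)] with k hr hk
    have hd := hden k
    have hδpos : 0 < δC k := by
      have := mul_pos (lt_trans (by norm_num) hr) hd
      rwa [div_mul_cancel₀ _ (ne_of_gt hd)] at this
    rw [Real.log_div (ne_of_gt hδpos) (ne_of_gt hd),
      Real.log_mul (ne_of_gt hc) (Real.exp_ne_zero _), Real.log_exp]
    field_simp
    ring
  -- δC = CBS eventually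
  have hδCBS : ∀ᶠ k in atTop, δC k = CBS (vimp k) k := by
    filter_upwards [eventually_ge_atTop (0 : ℝ)] with k hk
    rw [hδ k, max_eq_right, sub_zero]
    have := Real.one_le_exp hk
    linarith
  have hEq : -(A ^ 2) / 2 = -(Y - 1 / 2) := by
    apply tendsto_nhds_unique _ hδlim
    apply hCBSlim.congr'
    filter_upwards [hδCBS] with k hk
    rw [hk]
  -- translate to the matching equation
  have hA2 : A ^ 2 = (1 - β / 2) ^ 2 / β := by
    rw [hA, div_pow, Real.sq_sqrt hβ0.le]
  have hmatch : 1 / (2 * β) - 1 / 2 + β / 8 = Y - 1 / 2 := by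
    have h1 : (1 - β / 2) ^ 2 / β / 2 = Y - 1 / 2 := by
      have := hEq
      rw [hA2] at this
      linarith [this]
    field_simp at h1 ⊢
    nlinarith [h1]
  refine ⟨?_, hmatch, ?_⟩
  · have hYval : Y = 1 / (2 * β) + β / 8 := by linarith
    have hsq : Y ^ 2 - 1 / 4 = (1 / (2 * β) - β / 8) ^ 2 := by
      rw [hYval]; field_simp; ring
    have hpos : 0 ≤ 1 / (2 * β) - β / 8 := by
      rw [sub_nonneg, div_le_div_iff₀ (by norm_num) (by linarith)]
      nlinarith
    rw [hsq, Real.sqrt_sq hpos, hYval]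
    ring
  · intro β' hβ' heq'
    obtain ⟨hβ'0, hβ'2⟩ := hβ'
    have h1 : 1 / (2 * β') + β' / 8 = 1 / (2 * β) + β / 8 := by linarith
    have h2 : β ≠ 0 := ne_of_gt hβ0
    have h3 : β' ≠ 0 := ne_of_gt hβ'0
    field_simp at h1
    have hfac : (β - β') * (4 - β * β') = 0 := by linear_combination h1 / 2
    have h6 : β * β' < 4 := by nlinarith
    rcases mul_eq_zero.1 hfac with h | h
    · linarith
    · linarith
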